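/- Let X be a complex L-embedded Banach space, let F ⊆ X be a finite-dimensional subspace, and let (x_n)_{n∈ℕ} be a bounded sequence in X with x_n ≠ 0 for all n such that the normalized sequence (x_n/‖x_n‖) spans ℓ₁ almost isometrically. Let 𝒱 be a nonprincipal ultrafilter on ℕ and suppose lim_{𝒱} ‖x_n‖ > 0. Then for every η > 0 there is a set U ∈ 𝒱 such that ‖α x + β x_n‖ ≥ (1 - η)(|α| ‖x‖ + |β| ‖x_n‖) for all α, β ∈ ℂ, all n ∈ U, and all x ∈ F. -/

import Mathlib

open NormedSpace Filter

/-- Hahn-Banach with prescribed values. -/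
lemma exists_functional {X : Type*} [NormedAddCommGroup X] [NormedSpace ℂ X]
    {ι : Type*} (w : ι → X) (b : ι → ℂ)
    (hb : ∀ (T : Finset ι) (α : ι → ℂ),
      ‖∑ i ∈ T, α i * b i‖ ≤ ‖∑ i ∈ T, α i • w i‖) :
    ∃ f : X →L[ℂ] ℂ, ‖f‖ ≤ 1 ∧ ∀ i, f (w i) = b i := by
  classical
  set Tw : (ι →₀ ℂ) →ₗ[ℂ] X := Finsupp.linearCombination ℂ w with hTw
  set ℓ : (ι →₀ ℂ) →ₗ[ℂ] ℂ := Finsupp.linearCombination ℂ b with hℓ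
  have hsum : ∀ l : ι →₀ ℂ, ℓ l = ∑ i ∈ l.support, l i * b i := by
    intro l
    simp [hℓ, Finsupp.linearCombination_apply, Finsupp.sum, smul_eq_mul]
  have hsumw : ∀ l : ι →₀ ℂ, Tw l = ∑ i ∈ l.support, l i • w i := by
    intro l
    simp [hTw, Finsupp.linearCombination_apply, Finsupp.sum]
  have hkey : ∀ l : ι →₀ ℂ, ‖ℓ l‖ ≤ ‖Tw l‖ := by
    intro l; rw [hsum, hsumw]; exact hb l.support l
  have hker : LinearMap.ker Tw ≤ LinearMap.ker ℓ := by
    intro l hl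
    have h1 : Tw l = 0 := hl
    have := hkey l
    rw [h1, norm_zero] at this
    exact le_antisymm (by simpa using this) (norm_nonneg _) |> norm_eq_zero.mp
  -- map on the span
  let q : (ι →₀ ℂ) ⧸ LinearMap.ker Tw →ₗ[ℂ] ℂ := (LinearMap.ker Tw).liftQ ℓ hker
  let E1 : ((ι →₀ ℂ) ⧸ LinearMap.ker Tw) ≃ₗ[ℂ] LinearMap.range Tw := Tw.quotKerEquivRange
  let E2 : Submodule.span ℂ (Set.range w) ≃ₗ[ℂ] LinearMap.range Tw :=
    LinearEquiv.ofEq _ _ (Finsupp.range_linearCombination ℂ).symm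
  let g₀ : Submodule.span ℂ (Set.range w) →ₗ[ℂ] ℂ :=
    q ∘ₗ (E1.symm.toLinearMap ∘ₗ E2.toLinearMap)
  have hg₀ : ∀ l : ι →₀ ℂ, ∀ (hz : (Tw l : X) ∈ Submodule.span ℂ (Set.range w)),
      g₀ ⟨Tw l, hz⟩ = ℓ l := by
    intro l hz
    have h2 : E2 ⟨Tw l, hz⟩ = ⟨Tw l, ⟨l, rfl⟩⟩ := rfl
    have h3 : E1.symm ⟨Tw l, ⟨l, rfl⟩⟩ = Submodule.Quotient.mk l := by
      have : E1 (Submodule.Quotient.mk l) = ⟨Tw l, ⟨l, rfl⟩⟩ := by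
        apply Subtype.ext
        rfl
      rw [← this, LinearEquiv.symm_apply_apply]
    show q (E1.symm (E2 ⟨Tw l, hz⟩)) = ℓ l
    rw [h2, h3]
    exact Submodule.liftQ_apply _ _ _
  have hg₀norm : ∀ z : Submodule.span ℂ (Set.range w), ‖g₀ z‖ ≤ 1 * ‖(z : X)‖ := by
    intro z
    have hz : (z : X) ∈ LinearMap.range Tw := by
      rw [Finsupp.range_linearCombination]; exact z.2
    obtain ⟨l, hl⟩ := hz
    have hz2 : (⟨Tw l, by rw [hl]; exact z.2⟩ : Submodule.span ℂ (Set.range w)) = z :=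
      Subtype.ext hl
    rw [← hz2, hg₀ l _, one_mul]
    simpa [hl] using hkey l
  let G : Submodule.span ℂ (Set.range w) →L[ℂ] ℂ := LinearMap.mkContinuous g₀ 1 hg₀norm
  obtain ⟨g, hgext, hgnorm⟩ := exists_extension_norm_eq (Submodule.span ℂ (Set.range w)) G
  refine ⟨g, ?_, ?_⟩
  · rw [hgnorm]
    exact (LinearMap.mkContinuous_norm_le _ zero_le_one _)
  · intro i
    have hmem : w i ∈ Submodule.span ℂ (Set.range w) :=
      Submodule.subset_span ⟨i, rfl⟩
    have h1 : g (w i) = G ⟨w i, hmem⟩ := hgext ⟨w i, hmem⟩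
    have h2 : (⟨w i, hmem⟩ : Submodule.span ℂ (Set.range w))
        = ⟨Tw (Finsupp.single i 1), by
            rw [Finsupp.linearCombination_single, one_smul]; exact hmem⟩ := by
      apply Subtype.ext
      simp [hTw, Finsupp.linearCombination_single]
    rw [h1]
    show g₀ _ = b i
    rw [h2, hg₀]
    simp [hℓ, Finsupp.linearCombination_single]

/-- bounded sequences in proper spaces have limits along ultrafilters -/
lemma ultrafilter_limit {E : Type*} [NormedAddCommGroup E] [ProperSpace E]
    (𝒱 : Ultrafilter ℕ) (u : ℕ → E) (c : ℝ) (h : ∀ n, ‖u n‖ ≤ c) :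
    ∃ z : E, Tendsto u (𝒱 : Filter ℕ) (nhds z) ∧ ‖z‖ ≤ c := by
  have hc : (𝒱.map u : Filter E) ≤ Filter.principal (Metric.closedBall 0 c) := by
    rw [Filter.le_principal_iff]
    refine Filter.mem_map.mpr ?_
    have : ∀ n, n ∈ u ⁻¹' Metric.closedBall 0 c := by
      intro n; simp [Metric.mem_closedBall, dist_eq_norm, h n]
    exact Filter.univ_mem' this
  obtain ⟨z, hz, hz2⟩ := (isCompact_closedBall (0 : E) c).ultrafilter_le_nhds
    (𝒱.map u) hc
  refine ⟨z, hz2, ?_⟩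
  simpa [Metric.mem_closedBall, dist_eq_norm] using hz

lemma cofinite_mem (𝒱 : Ultrafilter ℕ) (h𝒱 : ∀ n : ℕ, (𝒱 : Filter ℕ) ≠ pure n)
    (s : Set ℕ) (h : sᶜ.Finite) : s ∈ 𝒱 := by
  by_contra hs
  have h2 : sᶜ ∈ 𝒱 := Ultrafilter.compl_mem_iff_notMem.mpr hs
  obtain ⟨n, _, hn⟩ := Ultrafilter.eq_pure_of_finite_mem h h2
  exact h𝒱 n (by rw [hn]; rfl)

/-- `phase` of a complex number -/
noncomputable def cphase (z : ℂ) : ℂ := if z = 0 then 1 else (‖z‖ : ℂ)⁻¹ * z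

lemma cphase_norm (z : ℂ) : ‖cphase z‖ = 1 := by
  unfold cphase
  split
  · simp
  · rename_i h
    rw [norm_mul, norm_inv]
    simp [h]

lemma cphase_decomp (z : ℂ) : z = (‖z‖ : ℂ) * cphase z := by
  unfold cphase
  split
  · simp_all
  · rename_i h
    rw [← mul_assoc, mul_inv_cancel₀ (by exact_mod_cast norm_ne_zero_iff.mpr h), one_mul]

lemma mul_conj_cphase (z : ℂ) : z * (starRingEnd ℂ) (cphase z) = (‖z‖ : ℂ) := by
  unfold cphase
  split
  · simp_all
  · rename_i h
    rw [map_mul, ← mul_assoc, mul_comm z, mul_assoc, Complex.mul_conj]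
    have h1 : (starRingEnd ℂ) ((‖z‖ : ℂ)⁻¹) = (‖z‖ : ℂ)⁻¹ := by
      rw [map_inv₀, Complex.conj_ofReal]
    rw [h1, Complex.normSq_eq_norm_sq]
    have h2 : ((‖z‖ : ℝ) : ℂ) ≠ 0 := by
      exact_mod_cast norm_ne_zero_iff.mpr h
    push_cast
    field_simp

lemma aux_key_l1 {X : Type*} [NormedAddCommGroup X] [NormedSpace ℂ X]
    (x : ℕ → X) (δ : ℕ → ℝ)
    (hl1 : ∀ m M : ℕ, m ≤ M → ∀ α : ℕ → ℂ,
      ‖∑ j ∈ Finset.Icc m M, α j • (‖x j‖⁻¹ • x j)‖ ≤ ∑ j ∈ Finset.Icc m M, ‖α j‖ ∧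
      (1 - δ m) * ∑ j ∈ Finset.Icc m M, ‖α j‖
        ≤ ‖∑ j ∈ Finset.Icc m M, α j • (‖x j‖⁻¹ • x j)‖)
    (e : ℕ → X) (he_def : e = fun n => ‖x n‖⁻¹ • x n) :
    ∀ (m : ℕ) (T : Finset ℕ) (α : ℕ → ℂ),
      (1 - δ m) * ∑ k ∈ T, ‖α k‖ ≤ ‖∑ k ∈ T, α k • e (k + m)‖ := by
  classical
  intro m T α
  set M := m + T.sup id with hM
  set A : ℕ → ℂ := fun j => if m ≤ j ∧ j - m ∈ T then α (j - m) else 0 with hA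
  have himg : (T.image (· + m)) ⊆ Finset.Icc m M := by
    intro j hj
    simp only [Finset.mem_image] at hj
    obtain ⟨k, hk, rfl⟩ := hj
    have h3 := Finset.le_sup (f := id) hk
    simp only [id] at h3
    simp only [Finset.mem_Icc]
    omega
  have hinj : ∀ a ∈ T, ∀ b ∈ T, a + m = b + m → a = b := by intro a _ b _ h; omega
  have hAval : ∀ k ∈ T, A (k + m) = α k := by
    intro k hk
    simp only [hA]
    rw [if_pos ⟨Nat.le_add_left m k, by simpa using hk⟩]
    congr 1
    omega
  have hAzero : ∀ j ∈ Finset.Icc m M, j ∉ T.image (· + m) → A j = 0 := by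
    intro j hjI hjT
    simp only [hA]
    rw [if_neg]
    rintro ⟨h1, h2⟩
    exact hjT (Finset.mem_image.mpr ⟨j - m, h2, by omega⟩)
  have e1 : ∑ j ∈ Finset.Icc m M, A j • e j = ∑ k ∈ T, α k • e (k + m) := by
    rw [← Finset.sum_subset himg (fun j h1 h2 => by rw [hAzero j h1 h2, zero_smul])]
    rw [Finset.sum_image hinj]
    exact Finset.sum_congr rfl (fun k hk => by rw [hAval k hk])
  have e2 : ∑ j ∈ Finset.Icc m M, ‖A j‖ = ∑ k ∈ T, ‖α k‖ := by
    rw [← Finset.sum_subset himg (fun j h1 h2 => by rw [hAzero j h1 h2, norm_zero])]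
    rw [Finset.sum_image hinj]
    exact Finset.sum_congr rfl (fun k hk => by rw [hAval k hk])
  have h4 := (hl1 m M (Nat.le_add_right m _) A).2
  rw [e2] at h4
  calc (1 - δ m) * ∑ k ∈ T, ‖α k‖
      ≤ ‖∑ j ∈ Finset.Icc m M, A j • (‖x j‖⁻¹ • x j)‖ := h4
    _ = ‖∑ j ∈ Finset.Icc m M, A j • e j‖ := by simp only [he_def]
    _ = ‖∑ k ∈ T, α k • e (k + m)‖ := by rw [e1]

section
variable {X : Type*} [NormedAddCommGroup X] [NormedSpace ℂ X]
lemma aux_pattern (e : ℕ → X) (δ : ℕ → ℝ) (hδ : ∀ m, 0 ≤ δ m ∧ δ m < 1)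
    (key_l1 : ∀ (m : ℕ) (T : Finset ℕ) (α : ℕ → ℂ),
      (1 - δ m) * ∑ k ∈ T, ‖α k‖ ≤ ‖∑ k ∈ T, α k • e (k + m)‖) :
    ∀ (m : ℕ) (θ : ℕ → ℂ), (∀ k, ‖θ k‖ = 1) →
      ∃ f : X →L[ℂ] ℂ, ‖f‖ ≤ 1 ∧
        ∀ k : ℕ, f (e (k + m)) = ((1 - δ m : ℝ) : ℂ) * (starRingEnd ℂ) (θ k) := by
  intro m θ hθ
  apply exists_functional (w := fun k => e (k + m))
    (b := fun k => ((1 - δ m : ℝ) : ℂ) * (starRingEnd ℂ) (θ k))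
  intro T α
  have hδm := hδ m
  calc ‖∑ k ∈ T, α k * (((1 - δ m : ℝ) : ℂ) * (starRingEnd ℂ) (θ k))‖
      ≤ ∑ k ∈ T, ‖α k * (((1 - δ m : ℝ) : ℂ) * (starRingEnd ℂ) (θ k))‖ :=
        norm_sum_le _ _
    _ = (1 - δ m) * ∑ k ∈ T, ‖α k‖ := by
        rw [Finset.mul_sum]
        refine Finset.sum_congr rfl (fun k _ => ?_)
        rw [norm_mul, norm_mul, RCLike.norm_conj, hθ k, mul_one, Complex.norm_real,
          Real.norm_eq_abs, abs_of_nonneg (by linarith)]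
        ring
    _ ≤ ‖∑ k ∈ T, α k • e (k + m)‖ := key_l1 m T α
end

lemma aux_hfy {X : Type*} [NormedAddCommGroup X] [NormedSpace ℂ X]
    (e : ℕ → X) (δ : ℕ → ℝ) (hδ : ∀ m, 0 ≤ δ m ∧ δ m < 1)
    (𝒱 : Ultrafilter ℕ) (v : StrongDual ℂ (StrongDual ℂ X)) (y : X) (r t : ℝ)
    (hr_def : r = ‖y‖) (ht1r : t ≤ 1 - r)
    (hco : ∀ (m : ℕ) (S : Finset ℕ), {n : ℕ | m ≤ n ∧ n - m ∉ S} ∈ (𝒱 : Filter ℕ))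
    (veval : ∀ (f : X →L[ℂ] ℂ) (c : ℂ),
      (∀ᶠ n in (𝒱 : Filter ℕ), f (e n) = c) → v f = c)
    (hsbound : ∀ f : StrongDual ℂ X, ‖f‖ ≤ 1 → ‖v f - f y‖ ≤ t) :
    ∀ (m : ℕ) (θ : ℕ → ℂ) (ψ : ℂ) (S : Finset ℕ), ‖ψ‖ = 1 →
      (∀ k, k ∉ S → θ k = ψ) →
      ∀ f : X →L[ℂ] ℂ, ‖f‖ ≤ 1 →
      (∀ k : ℕ, f (e (k + m)) = ((1 - δ m : ℝ) : ℂ) * (starRingEnd ℂ) (θ k)) →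
      r - δ m ≤ (ψ * f y).re := by
  intro m θ ψ S hψ hθS f hf hfe
  have hvf : v f = ((1 - δ m : ℝ) : ℂ) * (starRingEnd ℂ) ψ := by
    apply veval f _
    filter_upwards [hco m S] with n hn
    obtain ⟨hn1, hn2⟩ := hn
    have hn3 : n = (n - m) + m := by omega
    rw [hn3, hfe (n - m), hθS _ hn2]
  have hb := hsbound f hf
  rw [hvf] at hb
  have hψψ : ψ * (starRingEnd ℂ) ψ = 1 := by
    rw [Complex.mul_conj]
    norm_cast
    rw [Complex.normSq_eq_norm_sq, hψ, one_pow]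
  have h2 : (ψ * (((1 - δ m : ℝ) : ℂ) * (starRingEnd ℂ) ψ - f y)).re ≤ 1 - r := by
    calc (ψ * (((1 - δ m : ℝ) : ℂ) * (starRingEnd ℂ) ψ - f y)).re
        ≤ ‖ψ * (((1 - δ m : ℝ) : ℂ) * (starRingEnd ℂ) ψ - f y)‖ := by
          exact Complex.re_le_norm _
      _ = ‖ψ‖ * ‖((1 - δ m : ℝ) : ℂ) * (starRingEnd ℂ) ψ - f y‖ := norm_mul _ _
      _ ≤ 1 * t := by rw [hψ, one_mul]; simpa using hb
      _ ≤ 1 - r := by rw [one_mul]; exact ht1r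
  have h3 : (ψ * (((1 - δ m : ℝ) : ℂ) * (starRingEnd ℂ) ψ - f y)).re
      = (1 - δ m) - (ψ * f y).re := by
    rw [mul_sub]
    rw [show ψ * (((1 - δ m : ℝ) : ℂ) * (starRingEnd ℂ) ψ)
        = ((1 - δ m : ℝ) : ℂ) * (ψ * (starRingEnd ℂ) ψ) by ring, hψψ, mul_one]
    rw [Complex.sub_re, Complex.ofReal_re]
  rw [h3] at h2
  linarith

lemma aux_r_eq_zero {X : Type*} [NormedAddCommGroup X] [NormedSpace ℂ X]
    (e : ℕ → X) (δ : ℕ → ℝ) (hδ : ∀ m, 0 ≤ δ m ∧ δ m < 1)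
    (hδ0 : Tendsto δ atTop (nhds 0))
    (𝒱 : Ultrafilter ℕ) (v : StrongDual ℂ (StrongDual ℂ X)) (y : X) (r t : ℝ)
    (hr_def : r = ‖y‖) (ht1r : t ≤ 1 - r) (ht0 : 0 ≤ t) (hrt : r + t ≤ 1)
    (hr0' : 0 ≤ r)
    (pattern : ∀ (m : ℕ) (θ : ℕ → ℂ), (∀ k, ‖θ k‖ = 1) →
      ∃ f : X →L[ℂ] ℂ, ‖f‖ ≤ 1 ∧
        ∀ k : ℕ, f (e (k + m)) = ((1 - δ m : ℝ) : ℂ) * (starRingEnd ℂ) (θ k))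
    (hco : ∀ (m : ℕ) (S : Finset ℕ), {n : ℕ | m ≤ n ∧ n - m ∉ S} ∈ (𝒱 : Filter ℕ))
    (veval : ∀ (f : X →L[ℂ] ℂ) (c : ℂ),
      (∀ᶠ n in (𝒱 : Filter ℕ), f (e n) = c) → v f = c)
    (hsbound : ∀ f : StrongDual ℂ X, ‖f‖ ≤ 1 → ‖v f - f y‖ ≤ t)
    (hfy : ∀ (m : ℕ) (θ : ℕ → ℂ) (ψ : ℂ) (S : Finset ℕ), ‖ψ‖ = 1 →
      (∀ k, k ∉ S → θ k = ψ) →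
      ∀ f : X →L[ℂ] ℂ, ‖f‖ ≤ 1 →
      (∀ k : ℕ, f (e (k + m)) = ((1 - δ m : ℝ) : ℂ) * (starRingEnd ℂ) (θ k)) →
      r - δ m ≤ (ψ * f y).re) :
    r = 0 := by
  classical
  by_contra hr
  have hrpos : 0 < r := lt_of_le_of_ne hr0' (Ne.symm hr)
  have hrle1 : r ≤ 1 := by linarith
  obtain ⟨m, hm⟩ : ∃ m, δ m < r * r :=
    ((hδ0.eventually (gt_mem_nhds (show (0:ℝ) < r * r by positivity))).exists)
  have hδm := hδ m
  have hδmr : δ m < r := lt_of_lt_of_le hm (by nlinarith)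
  set c : ℝ := 1 - δ m / r with hc
  have hcpos : 0 < c := by
    rw [hc]
    have h1 : δ m / r < 1 := (div_lt_one hrpos).mpr hδmr
    linarith
  have hcr : c * r = r - δ m := by
    rw [hc]; field_simp
  have hcle : c ≤ 1 - δ m := by
    rw [hc]
    have h1 : δ m ≤ δ m / r := by
      rw [le_div_iff₀ hrpos]
      nlinarith [hδm.1]
    linarith
  -- the functional h
  set w : ℕ → X := fun k => if k = 0 then y else e (k - 1 + m) with hw
  set b : ℕ → ℂ := fun k => if k = 0 then (-(c * r) : ℝ) else ((c : ℝ) : ℂ) with hb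
  have hbB : ∀ (T : Finset ℕ) (α : ℕ → ℂ),
      ‖∑ k ∈ T, α k * b k‖ ≤ ‖∑ k ∈ T, α k • w k‖ := by
    intro T α
    set ψ : ℂ := cphase (α 0) with hψ_def
    set θ : ℕ → ℂ := fun k => if k + 1 ∈ T then cphase (α (k + 1)) else ψ with hθ_def
    have hθ1 : ∀ k, ‖θ k‖ = 1 := by
      intro k
      rw [hθ_def]
      dsimp only
      split
      · exact cphase_norm _
      · exact cphase_norm _
    obtain ⟨f, hf1, hf2⟩ := pattern m θ hθ1
    have hψ1 : ‖ψ‖ = 1 := cphase_norm _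
    have hθS : ∀ k, k ∉ T.image (fun j => j - 1) → θ k = ψ := by
      intro k hk
      rw [hθ_def]
      dsimp only
      rw [if_neg]
      intro hkT
      exact hk (Finset.mem_image.mpr ⟨k + 1, hkT, by omega⟩)
    have hre := hfy m θ ψ (T.image (fun j => j - 1)) hψ1 hθS f hf1 hf2
    -- pointwise bounds
    have hpoint : ∀ k ∈ T, ‖α k‖ * ‖b k‖ ≤ (α k * f (w k)).re := by
      intro k hk
      by_cases hk0 : k = 0
      · subst hk0
        rw [hw, hb]
        dsimp only
        rw [if_pos rfl, if_pos rfl]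
        have hα0 : α 0 = ((‖α 0‖ : ℝ) : ℂ) * ψ := by rw [hψ_def]; exact cphase_decomp _
        calc ‖α 0‖ * ‖((-(c * r) : ℝ) : ℂ)‖ = ‖α 0‖ * (c * r) := by
              rw [Complex.norm_real, Real.norm_eq_abs, abs_neg,
                abs_of_pos (by positivity)]
          _ = ‖α 0‖ * (r - δ m) := by rw [hcr]
          _ ≤ ‖α 0‖ * (ψ * f y).re := by
              exact mul_le_mul_of_nonneg_left hre (norm_nonneg _)
          _ = (α 0 * f y).re := by
              nth_rewrite 2 [hα0]
              rw [mul_assoc, Complex.re_ofReal_mul]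
      · rw [hw, hb]
        dsimp only
        rw [if_neg hk0, if_neg hk0]
        have hfk : f (e (k - 1 + m)) = ((1 - δ m : ℝ) : ℂ) * (starRingEnd ℂ) (θ (k - 1)) :=
          hf2 (k - 1)
        have hθk : θ (k - 1) = cphase (α k) := by
          rw [hθ_def]
          dsimp only
          rw [show k - 1 + 1 = k by omega, if_pos hk]
        rw [hfk, hθk]
        calc ‖α k‖ * ‖((c : ℝ) : ℂ)‖ = ‖α k‖ * c := by
              rw [Complex.norm_real, Real.norm_eq_abs, abs_of_pos hcpos]
          _ ≤ (1 - δ m) * ‖α k‖ := by nlinarith [norm_nonneg (α k)]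
          _ = (α k * (((1 - δ m : ℝ) : ℂ) * (starRingEnd ℂ) (cphase (α k)))).re := by
              rw [show α k * (((1 - δ m : ℝ) : ℂ) * (starRingEnd ℂ) (cphase (α k)))
                  = ((1 - δ m : ℝ) : ℂ) * (α k * (starRingEnd ℂ) (cphase (α k))) by ring]
              rw [mul_conj_cphase, Complex.re_ofReal_mul, Complex.ofReal_re]
    calc ‖∑ k ∈ T, α k * b k‖ ≤ ∑ k ∈ T, ‖α k * b k‖ := norm_sum_le _ _
      _ = ∑ k ∈ T, ‖α k‖ * ‖b k‖ := by
          exact Finset.sum_congr rfl (fun k _ => norm_mul _ _)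
      _ ≤ ∑ k ∈ T, (α k * f (w k)).re := Finset.sum_le_sum hpoint
      _ = (f (∑ k ∈ T, α k • w k)).re := by
          rw [map_sum, Complex.re_sum]
          exact Finset.sum_congr rfl (fun k _ => by
            rw [ContinuousLinearMap.map_smul, smul_eq_mul])
      _ ≤ ‖f (∑ k ∈ T, α k • w k)‖ := by
          exact Complex.re_le_norm _
      _ ≤ ‖f‖ * ‖∑ k ∈ T, α k • w k‖ := f.le_opNorm _
      _ ≤ ‖∑ k ∈ T, α k • w k‖ := by
          nlinarith [norm_nonneg (∑ k ∈ T, α k • w k), hf1]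
  obtain ⟨h, hh1, hh2⟩ := exists_functional w b hbB
  have hhy : h y = ((-(c * r) : ℝ) : ℂ) := by
    have := hh2 0
    rw [hw, hb] at this
    simpa using this
  have hhe : ∀ j, m ≤ j → h (e j) = ((c : ℝ) : ℂ) := by
    intro j hj
    have := hh2 (j - m + 1)
    rw [hw, hb] at this
    dsimp only at this
    rw [if_neg (by omega), if_neg (by omega)] at this
    rw [show j - m + 1 - 1 + m = j by omega] at this
    exact this
  have hvh : v h = ((c : ℝ) : ℂ) := by
    apply veval
    filter_upwards [hco m ∅] with n hn
    exact hhe n hn.1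
  have hfinal := hsbound h hh1
  rw [hvh, hhy] at hfinal
  have : ‖((c : ℝ) : ℂ) - ((-(c * r) : ℝ) : ℂ)‖ = c + c * r := by
    rw [show ((c : ℝ) : ℂ) - ((-(c * r) : ℝ) : ℂ) = ((c + c * r : ℝ) : ℂ) by push_cast; ring]
    rw [Complex.norm_real, Real.norm_eq_abs, abs_of_pos (by positivity)]
  rw [this] at hfinal
  -- c + c*r ≤ t ≤ 1 - r, c*r = r - δm, δm < r², r ≤ 1 : contradiction
  nlinarith [hm, hcr, hrpos, hrle1, ht1r]

lemma aux_norm_one {X : Type*} [NormedAddCommGroup X] [NormedSpace ℂ X]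
    (e : ℕ → X) (δ : ℕ → ℝ) (hδ : ∀ m, 0 ≤ δ m ∧ δ m < 1)
    (hδ0 : Tendsto δ atTop (nhds 0))
    (𝒱 : Ultrafilter ℕ) (v : StrongDual ℂ (StrongDual ℂ X))
    (hvnorm : ‖v‖ ≤ 1)
    (pattern : ∀ (m : ℕ) (θ : ℕ → ℂ), (∀ k, ‖θ k‖ = 1) →
      ∃ f : X →L[ℂ] ℂ, ‖f‖ ≤ 1 ∧
        ∀ k : ℕ, f (e (k + m)) = ((1 - δ m : ℝ) : ℂ) * (starRingEnd ℂ) (θ k))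
    (hco : ∀ (m : ℕ) (S : Finset ℕ), {n : ℕ | m ≤ n ∧ n - m ∉ S} ∈ (𝒱 : Filter ℕ))
    (veval : ∀ (f : X →L[ℂ] ℂ) (c : ℂ),
      (∀ᶠ n in (𝒱 : Filter ℕ), f (e n) = c) → v f = c) :
    ‖v‖ = 1 := by
  have hv_ge : ∀ m : ℕ, 1 - δ m ≤ ‖v‖ := by
    intro m
    have hδm := hδ m
    obtain ⟨f, hf1, hf2⟩ := pattern m (fun _ => 1) (fun _ => by simp)
    have hvf : v f = ((1 - δ m : ℝ) : ℂ) := by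
      apply veval
      filter_upwards [hco m ∅] with n hn
      have hn3 : n = (n - m) + m := by omega
      rw [hn3, hf2 (n - m)]
      simp
    have h1 : ‖v f‖ ≤ ‖v‖ * ‖f‖ := v.le_opNorm f
    rw [hvf, Complex.norm_real, Real.norm_eq_abs, abs_of_nonneg (by linarith)] at h1
    nlinarith [norm_nonneg v]
  refine le_antisymm hvnorm ?_
  have hten : Tendsto (fun m => 1 - δ m) atTop (nhds 1) := by
    have := tendsto_const_nhds (x := (1:ℝ)) (f := atTop (α := ℕ)) |>.sub hδ0
    simpa using this
  exact le_of_tendsto hten (Filter.Eventually.of_forall hv_ge)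

lemma aux_final {X : Type*} [NormedAddCommGroup X] [NormedSpace ℂ X]
    (Xs : Submodule ℂ (StrongDual ℂ (StrongDual ℂ X)))
    (hXs_norm : ∀ (x : X), ∀ s ∈ Xs, ‖inclusionInDoubleDual ℂ X x + s‖ = ‖x‖ + ‖s‖)
    (F : Subspace ℂ X) (hF : FiniteDimensional ℂ F)
    (x : ℕ → X) (hx : ∀ n, x n ≠ 0)
    (e : ℕ → X) (he_def : e = fun n => ‖x n‖⁻¹ • x n) (he : ∀ n, ‖e n‖ = 1)
    (𝒱 : Ultrafilter ℕ) (v : StrongDual ℂ (StrongDual ℂ X))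
    (hv : ∀ f : StrongDual ℂ X, Tendsto (fun n => f (e n)) (𝒱 : Filter ℕ) (nhds (v f)))
    (hvXs : v ∈ Xs) (hv1 : ‖v‖ = 1)
    (η : ℝ) (hη : 0 < η) (hη1 : η < 1) :
    ∃ U ∈ 𝒱, ∀ α β : ℂ, ∀ n ∈ U, ∀ ξ ∈ F,
      (1 - η) * (‖α‖ * ‖ξ‖ + ‖β‖ * ‖x n‖) ≤ ‖α • ξ + β • x n‖ := by
  classical
  have hxn : ∀ n, ‖x n‖ ≠ 0 := fun n => norm_ne_zero_iff.mpr (hx n)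
  set Q : ℕ → Prop := fun n => ∀ α β : ℂ, ∀ ξ, ξ ∈ F →
      (1 - η) * (‖α‖ * ‖ξ‖ + ‖β‖ * ‖x n‖) ≤ ‖α • ξ + β • x n‖ with hQ
  by_cases hQV : {n | Q n} ∈ 𝒱
  · exact ⟨{n | Q n}, hQV, fun α β n hn ξ hξ => hn α β ξ hξ⟩
  exfalso
  have hB : {n | Q n}ᶜ ∈ 𝒱 := Ultrafilter.compl_mem_iff_notMem.mpr hQV
  -- witnesses
  have hwitness : ∀ n : ℕ, ∃ (p : F) (wc : ℂ), (‖p‖ + ‖wc‖ = 1) ∧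
      (n ∈ {n | Q n}ᶜ → ‖(p : X) + wc • e n‖ < 1 - η) := by
    intro n
    by_cases hn : n ∈ {n | Q n}ᶜ
    · have hnQ : ¬ Q n := hn
      rw [hQ] at hnQ
      simp only [not_forall, not_le] at hnQ
      obtain ⟨α, β, ξ, hξ, hlt⟩ := hnQ
      set T : ℝ := ‖α‖ * ‖ξ‖ + ‖β‖ * ‖x n‖ with hT_def
      have hT : 0 < T := by
        by_contra hT'
        push_neg at hT'
        nlinarith [norm_nonneg (α • ξ + β • x n), norm_nonneg α, norm_nonneg β,
          norm_nonneg ξ, norm_nonneg (x n), mul_nonneg (norm_nonneg α) (norm_nonneg ξ),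
          mul_nonneg (norm_nonneg β) (norm_nonneg (x n))]
      refine ⟨(α / (T : ℂ)) • (⟨ξ, hξ⟩ : F), (β / (T : ℂ)) * (‖x n‖ : ℂ), ?_, fun _ => ?_⟩
      · have h1 : ‖(α / (T : ℂ)) • (⟨ξ, hξ⟩ : F)‖ = ‖α‖ / T * ‖ξ‖ := by
          rw [norm_smul, norm_div, Complex.norm_real, Real.norm_eq_abs, abs_of_pos hT]
          rfl
        have h2 : ‖(β / (T : ℂ)) * (‖x n‖ : ℂ)‖ = ‖β‖ / T * ‖x n‖ := by
          rw [norm_mul, norm_div, Complex.norm_real, Complex.norm_real,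
            Real.norm_eq_abs, Real.norm_eq_abs, abs_of_pos hT, abs_of_nonneg (norm_nonneg _)]
        rw [h1, h2, div_mul_eq_mul_div, div_mul_eq_mul_div, ← add_div, hT_def]
        have hTne : ‖α‖ * ‖ξ‖ + ‖β‖ * ‖x n‖ ≠ 0 := by rw [hT_def] at hT; exact ne_of_gt hT
        exact div_self hTne
      · have hcoe : (((α / (T : ℂ)) • (⟨ξ, hξ⟩ : F) : F) : X) = (α / (T : ℂ)) • ξ := rfl
        have hsm : ((β / (T : ℂ)) * (‖x n‖ : ℂ)) • e n = (β / (T : ℂ)) • x n := by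
          rw [he_def]
          dsimp only
          rw [show (‖x n‖⁻¹ : ℝ) • x n = ((‖x n‖⁻¹ : ℝ) : ℂ) • x n from (Complex.coe_smul _ _).symm]
          rw [smul_smul]
          congr 1
          rw [mul_assoc]
          rw [show ((‖x n‖ : ℝ) : ℂ) * ((‖x n‖⁻¹ : ℝ) : ℂ) = 1 by
            push_cast
            exact mul_inv_cancel₀ (by exact_mod_cast hxn n)]
          rw [mul_one]
        rw [hcoe, hsm]
        have hcomb : (α / (T : ℂ)) • ξ + (β / (T : ℂ)) • x n
            = ((T : ℂ))⁻¹ • (α • ξ + β • x n) := by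
          rw [smul_add, smul_smul, smul_smul]
          congr 2 <;> field_simp
        rw [hcomb, norm_smul, norm_inv, Complex.norm_real, Real.norm_eq_abs, abs_of_pos hT]
        calc T⁻¹ * ‖α • ξ + β • x n‖ < T⁻¹ * ((1 - η) * T) :=
              mul_lt_mul_of_pos_left hlt (inv_pos.mpr hT)
          _ = 1 - η := by field_simp
    · exact ⟨0, 1, by simp, fun hn' => absurd hn' hn⟩
  choose p wc hnorm1 hlt using hwitness
  haveI : ProperSpace F := FiniteDimensional.proper ℂ F
  obtain ⟨ζ, hζ, -⟩ := ultrafilter_limit (E := F) 𝒱 p 1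
    (fun n => by have := hnorm1 n; have := norm_nonneg (wc n); linarith)
  obtain ⟨w₀, hw₀, -⟩ := ultrafilter_limit (E := ℂ) 𝒱 wc 1
    (fun n => by have := hnorm1 n; have := norm_nonneg (p n); linarith)
  have hsum1 : ‖ζ‖ + ‖w₀‖ = 1 := by
    have h1 : Tendsto (fun n => ‖p n‖ + ‖wc n‖) (𝒱 : Filter ℕ) (nhds (‖ζ‖ + ‖w₀‖)) :=
      (hζ.norm).add (hw₀.norm)
    have h2 : Tendsto (fun n => ‖p n‖ + ‖wc n‖) (𝒱 : Filter ℕ) (nhds 1) := by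
      refine Tendsto.congr' ?_ tendsto_const_nhds
      exact Filter.Eventually.of_forall (fun n => (hnorm1 n).symm)
    exact tendsto_nhds_unique h1 h2
  -- the norm upper bound
  have hub : ∀ f : StrongDual ℂ X, ‖f (ζ : X) + w₀ * v f‖ ≤ (1 - η) * ‖f‖ := by
    intro f
    have h1 : Tendsto (fun n => f (p n : X) + wc n * f (e n)) (𝒱 : Filter ℕ)
        (nhds (f (ζ : X) + w₀ * v f)) := by
      refine Tendsto.add ?_ (hw₀.mul (hv f))
      have hc : Continuous fun q : F => f (q : X) :=
        f.continuous.comp continuous_subtype_val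
      exact (hc.tendsto ζ).comp hζ
    refine le_of_tendsto h1.norm ?_
    filter_upwards [hB] with n hn
    have h2 : f (p n : X) + wc n * f (e n) = f ((p n : X) + wc n • e n) := by
      rw [map_add, ContinuousLinearMap.map_smul, smul_eq_mul]
    rw [h2]
    calc ‖f ((p n : X) + wc n • e n)‖ ≤ ‖f‖ * ‖(p n : X) + wc n • e n‖ := f.le_opNorm _
      _ ≤ ‖f‖ * (1 - η) := by
          exact mul_le_mul_of_nonneg_left (le_of_lt (hlt n hn)) (norm_nonneg f)
      _ = (1 - η) * ‖f‖ := mul_comm _ _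
  have hnormle : ‖inclusionInDoubleDual ℂ X (ζ : X) + w₀ • v‖ ≤ 1 - η := by
    refine ContinuousLinearMap.opNorm_le_bound _ (by linarith) (fun f => ?_)
    have h3 : (inclusionInDoubleDual ℂ X (ζ : X) + w₀ • v) f = f (ζ : X) + w₀ * v f := by
      rw [ContinuousLinearMap.add_apply, dual_def, ContinuousLinearMap.smul_apply,
        smul_eq_mul]
    rw [h3]
    exact hub f
  have heq : ‖inclusionInDoubleDual ℂ X (ζ : X) + w₀ • v‖ = ‖ζ‖ + ‖w₀‖ := by
    rw [hXs_norm (ζ : X) (w₀ • v) (Xs.smul_mem w₀ hvXs)]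
    rw [(NormedSpace.toNormSMulClass (𝕜 := ℂ) (E := StrongDual ℂ (StrongDual ℂ X))).norm_smul, hv1, mul_one]
    rfl
  rw [heq, hsum1] at hnormle
  linarith

set_option maxHeartbeats 1000000 in
theorem l_embedded_almost_l_orthogonality
    {X : Type*} [NormedAddCommGroup X] [NormedSpace ℂ X] [CompleteSpace X]
    (Xs : Submodule ℂ (StrongDual ℂ (StrongDual ℂ X)))
    (hXs_closed : IsClosed (Xs : Set (StrongDual ℂ (StrongDual ℂ X))))
    (hXs_compl : IsCompl (LinearMap.range (inclusionInDoubleDual ℂ X : X →ₗ[ℂ] StrongDual ℂ (StrongDual ℂ X))) Xs)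
    (hXs_norm : ∀ (x : X), ∀ s ∈ Xs, ‖inclusionInDoubleDual ℂ X x + s‖ = ‖x‖ + ‖s‖)
    (F : Subspace ℂ X) (hF : FiniteDimensional ℂ F)
    (x : ℕ → X) (C : ℝ) (hbdd : ∀ n, ‖x n‖ ≤ C) (hx : ∀ n, x n ≠ 0)
    (δ : ℕ → ℝ) (hδ : ∀ m, 0 ≤ δ m ∧ δ m < 1) (hδ0 : Tendsto δ atTop (nhds 0))
    (hl1 : ∀ m M : ℕ, m ≤ M → ∀ α : ℕ → ℂ,
      ‖∑ j ∈ Finset.Icc m M, α j • (‖x j‖⁻¹ • x j)‖ ≤ ∑ j ∈ Finset.Icc m M, ‖α j‖ ∧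
      (1 - δ m) * ∑ j ∈ Finset.Icc m M, ‖α j‖
        ≤ ‖∑ j ∈ Finset.Icc m M, α j • (‖x j‖⁻¹ • x j)‖)
    (𝒱 : Ultrafilter ℕ) (h𝒱 : ∀ n : ℕ, (𝒱 : Filter ℕ) ≠ pure n)
    (L : ℝ) (hL : 0 < L)
    (hlim : Tendsto (fun n => ‖x n‖) (𝒱 : Filter ℕ) (nhds L)) :
    ∀ η : ℝ, 0 < η → ∃ U ∈ 𝒱, ∀ α β : ℂ, ∀ n ∈ U, ∀ ξ ∈ F,
      (1 - η) * (‖α‖ * ‖ξ‖ + ‖β‖ * ‖x n‖) ≤ ‖α • ξ + β • x n‖ := by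
  classical
  intro η hη
  rcases le_or_gt 1 η with hη1 | hη1
  · refine ⟨Set.univ, Filter.univ_mem, fun α β n _ ξ hξ => ?_⟩
    have h2 : (0:ℝ) ≤ ‖α‖ * ‖ξ‖ + ‖β‖ * ‖x n‖ := by positivity
    nlinarith [norm_nonneg (α • ξ + β • x n)]
  obtain ⟨e, he_def⟩ : ∃ e : ℕ → X, e = fun n => ‖x n‖⁻¹ • x n := ⟨_, rfl⟩
  have hxn : ∀ n, ‖x n‖ ≠ 0 := fun n => norm_ne_zero_iff.mpr (hx n)
  have he : ∀ n, ‖e n‖ = 1 := by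
    intro n
    rw [he_def]
    simp only [norm_smul, norm_inv, norm_norm]
    exact inv_mul_cancel₀ (hxn n)
  have key_l1 := aux_key_l1 x δ hl1 e he_def
  -- the ultrafilter weak* limit v of (J (e n))
  have hlimf : ∀ f : StrongDual ℂ X, ∃ c : ℂ,
      Tendsto (fun n => f (e n)) (𝒱 : Filter ℕ) (nhds c) ∧ ‖c‖ ≤ ‖f‖ := by
    intro f
    refine ultrafilter_limit 𝒱 _ ‖f‖ (fun n => ?_)
    calc ‖f (e n)‖ ≤ ‖f‖ * ‖e n‖ := f.le_opNorm _
    _ = ‖f‖ := by rw [he n, mul_one]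
  choose vf hvf hvfnorm using hlimf
  have hadd : ∀ f g : StrongDual ℂ X, vf (f + g) = vf f + vf g := by
    intro f g
    refine tendsto_nhds_unique (hvf (f + g)) ?_
    have := (hvf f).add (hvf g)
    simpa using this
  have hsmul : ∀ (c : ℂ) (f : StrongDual ℂ X), vf (c • f) = c • vf f := by
    intro c f
    refine tendsto_nhds_unique (hvf (c • f)) ?_
    have := (hvf f).const_mul c
    simpa [smul_eq_mul] using this
  obtain ⟨v, hv, hvnorm⟩ : ∃ v : StrongDual ℂ (StrongDual ℂ X),
      (∀ f : StrongDual ℂ X, Tendsto (fun n => f (e n)) (𝒱 : Filter ℕ) (nhds (v f))) ∧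
      ‖v‖ ≤ 1 :=
    ⟨LinearMap.mkContinuous { toFun := vf, map_add' := hadd, map_smul' := hsmul } 1
        (fun f => by simpa using hvfnorm f),
      fun f => hvf f, LinearMap.mkContinuous_norm_le _ zero_le_one _⟩
  -- decomposition
  obtain ⟨a, s, ha, hs, hassum⟩ :=
    Submodule.codisjoint_iff_exists_add_eq.mp hXs_compl.codisjoint v
  obtain ⟨y, hy⟩ := ha
  rw [← hy] at hassum
  change inclusionInDoubleDual ℂ X y + s = v at hassum
  obtain ⟨r, hr_def⟩ : ∃ r : ℝ, r = ‖y‖ := ⟨_, rfl⟩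
  obtain ⟨t, ht_def⟩ : ∃ t : ℝ, t = ‖s‖ := ⟨_, rfl⟩
  have hrt : r + t ≤ 1 := by
    have h1 := hXs_norm y s hs
    rw [hassum] at h1
    rw [hr_def, ht_def, ← h1]
    exact hvnorm
  have ht0 : 0 ≤ t := ht_def ▸ norm_nonneg s
  have hr0' : 0 ≤ r := hr_def ▸ norm_nonneg y
  have ht1r : t ≤ 1 - r := by linarith
  have pattern := aux_pattern e δ hδ key_l1
  -- cofinite sets
  have hco : ∀ (m : ℕ) (S : Finset ℕ), {n : ℕ | m ≤ n ∧ n - m ∉ S} ∈ (𝒱 : Filter ℕ) := by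
    intro m S
    apply cofinite_mem 𝒱 h𝒱
    apply Set.Finite.subset (Set.finite_Iio (m + S.sup id + 1))
    intro n hn
    simp only [Set.mem_compl_iff, Set.mem_setOf_eq, not_and, not_not] at hn
    simp only [Set.mem_Iio]
    by_cases h1 : m ≤ n
    · have h2 := hn h1
      have h3 := Finset.le_sup (f := id) h2
      simp only [id] at h3
      omega
    · omega
  -- evaluating v on eventually constant functionals
  have veval : ∀ (f : X →L[ℂ] ℂ) (c : ℂ),
      (∀ᶠ n in (𝒱 : Filter ℕ), f (e n) = c) → v f = c := by
    intro f c hev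
    refine tendsto_nhds_unique (hv f) ?_
    refine Tendsto.congr' ?_ tendsto_const_nhds
    filter_upwards [hev] with n hn using hn.symm
  have hseval : ∀ f : StrongDual ℂ X, s f = v f - f y := by
    intro f
    have h1 := DFunLike.congr_fun hassum f
    simp only [ContinuousLinearMap.add_apply, dual_def] at h1
    linear_combination h1
  have hsbound : ∀ f : StrongDual ℂ X, ‖f‖ ≤ 1 → ‖v f - f y‖ ≤ t := by
    intro f hf
    rw [← hseval f]
    calc ‖s f‖ ≤ ‖s‖ * ‖f‖ := s.le_opNorm f
    _ ≤ t * 1 := by rw [ht_def]; exact mul_le_mul_of_nonneg_left hf (norm_nonneg s)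
    _ = t := mul_one t
  have hfy := aux_hfy e δ hδ 𝒱 v y r t hr_def ht1r hco veval hsbound
  have hr0 := aux_r_eq_zero e δ hδ hδ0 𝒱 v y r t hr_def ht1r ht0 hrt hr0' pattern hco
    veval hsbound hfy
  have hy0 : y = 0 := by
    rw [hr_def] at hr0
    exact norm_eq_zero.mp hr0
  have hvs : v = s := by rw [← hassum, hy0, map_zero, zero_add]
  have hvXs : v ∈ Xs := hvs ▸ hs
  have hv1 : ‖v‖ = 1 := aux_norm_one e δ hδ hδ0 𝒱 v hvnorm pattern hco veval
  exact aux_final Xs hXs_norm F hF x hx e he_def he 𝒱 v hv hvXs hv1 η hη hη1
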